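/- If G is a directed ring (directed cycle) on n ≥ 3 vertices, then the temporality of G with respect to the all-paths property equals 2; that is, there is a labeling that preserves every simple path of G and assigns at most 2 labels to each edge, and no labeling with at most 1 label per edge preserves every simple path of G. -/

import Mathlib

/-- `w` is a simple path of the digraph with edge relation `E`: a sequence of
`k + 1` distinct vertices joined by consecutive edges. -/
def IsPath {V : Type*} (E : V → V → Prop) {k : ℕ} (w : Fin (k + 1) → V) : Prop :=
  Function.Injective w ∧ ∀ i : Fin k, E (w i.castSucc) (w i.succ)

/-- The labeling `lab` preserves the path `w`: there is a strictly increasing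
choice of labels along the consecutive edges of `w`. -/
def Preserves {V : Type*} (lab : V → V → Finset ℕ) {k : ℕ} (w : Fin (k + 1) → V) : Prop :=
  ∃ l : Fin k → ℕ, StrictMono l ∧ ∀ i : Fin k, l i ∈ lab (w i.castSucc) (w i.succ)

/-- The labeling `lab` preserves every simple path of the digraph `E`
(the "all paths" property). -/
def PreservesAll {V : Type*} (E : V → V → Prop) (lab : V → V → Finset ℕ) : Prop :=
  ∀ (k : ℕ) (w : Fin (k + 1) → V), IsPath E w → Preserves lab w

/-- The directed ring on `n` vertices `0, 1, …, n-1`: there is an edge from `i`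
to `j` iff `j = i + 1 (mod n)`. -/
def ringAdj (n : ℕ) : Fin n → Fin n → Prop :=
  fun i j => (j : ℕ) = ((i : ℕ) + 1) % n

/-- The temporality of the directed ring on `n ≥ 3` vertices w.r.t. the all-paths
property equals 2: some labeling with at most 2 labels per edge preserves every
simple path, and no labeling with at most 1 label per edge does. -/
theorem temporality_ring_all_paths_eq_two (n : ℕ) (hn : 3 ≤ n) :
    (∃ lab : Fin n → Fin n → Finset ℕ,
      PreservesAll (ringAdj n) lab ∧
      ∀ i j, ringAdj n i j → (lab i j).card ≤ 2) ∧
    ∀ lab : Fin n → Fin n → Finset ℕ,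
      (∀ i j, ringAdj n i j → (lab i j).card ≤ 1) → ¬ PreservesAll (ringAdj n) lab := by
  haveI : NeZero n := ⟨by omega⟩
  have hedge1 : ∀ j : Fin n, ringAdj n j (j + 1) := by
    intro j
    show ((j + 1 : Fin n) : ℕ) = ((j : ℕ) + 1) % n
    have h1 : ((1 : Fin n) : ℕ) = 1 := by
      rw [Fin.val_one']; exact Nat.mod_eq_of_lt (by omega)
    rw [Fin.add_def, h1]
  have natkey : ∀ a : ℕ, a < n →
      (a+1) % n ≠ a ∧ ((a+1) % n + 1) % n ≠ a ∧ ((a+1) % n + 1) % n ≠ (a+1) % n := by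
    intro a ha
    rcases Nat.lt_or_ge (a+1) n with h | h
    · rw [Nat.mod_eq_of_lt h]
      rcases Nat.lt_or_ge (a+2) n with h2 | h2
      · rw [Nat.mod_eq_of_lt (by omega)]; omega
      · have hn' : a + 1 + 1 = n := by omega
        rw [hn', Nat.mod_self]; omega
    · have hn' : a + 1 = n := by omega
      rw [hn', Nat.mod_self]
      simp only [Nat.zero_add]
      rw [Nat.mod_eq_of_lt (by omega)]; omega
  constructor
  · refine ⟨fun i _ => {(i : ℕ), (i : ℕ) + n}, ?_, ?_⟩
    · intro k w hw
      obtain ⟨hinj, hedge⟩ := hw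
      have hk : k + 1 ≤ n := by simpa using Fintype.card_le_of_injective w hinj
      have hval : ∀ (m : ℕ) (hm : m < k + 1), (w ⟨m, hm⟩ : ℕ) = ((w 0 : ℕ) + m) % n := by
        intro m
        induction m with
        | zero =>
          intro hm
          have : (⟨0, hm⟩ : Fin (k+1)) = 0 := rfl
          rw [this]
          exact (Nat.mod_eq_of_lt (by simpa using (w 0).isLt)).symm
        | succ m ih =>
          intro hm
          have hm' : m < k + 1 := by omega
          have hmk : m < k := by omega
          have he := hedge ⟨m, hmk⟩
          have h1 : (⟨m, hmk⟩ : Fin k).castSucc = ⟨m, hm'⟩ := rfl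
          have h2 : (⟨m, hmk⟩ : Fin k).succ = ⟨m + 1, hm⟩ := rfl
          rw [h1, h2] at he
          rw [he, ih hm', Nat.mod_add_mod, ← Nat.add_assoc]
      refine ⟨fun i => (w 0 : ℕ) + i, ?_, ?_⟩
      · intro a b hab
        exact Nat.add_lt_add_left (Fin.lt_def.mp hab) _
      · intro i
        have hc : (w i.castSucc : ℕ) = ((w 0 : ℕ) + i) % n := by
          have : i.castSucc = ⟨(i : ℕ), by omega⟩ := rfl
          rw [this, hval]
        simp only [Finset.mem_insert, Finset.mem_singleton]
        have hlt : (w 0 : ℕ) + i < 2 * n := by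
          have := (w 0).isLt; have := i.isLt; omega
        rcases Nat.lt_or_ge ((w 0 : ℕ) + i) n with h | h
        · left; rw [hc, Nat.mod_eq_of_lt h]
        · right
          rw [hc, Nat.mod_eq_sub_mod h, Nat.mod_eq_of_lt (by omega)]
          omega
    · intro i j _
      exact (Finset.card_insert_le _ _).trans (by simp)
  · intro lab hcard hP
    have hne2 : ∀ j : Fin n, j + 1 ≠ j := by
      intro j h
      have := congrArg Fin.val h
      rw [hedge1 j] at this
      exact (natkey j j.isLt).1 this
    have hval2 : ∀ j : Fin n, ((j + 2 : Fin n) : ℕ) = (((j : ℕ) + 1) % n + 1) % n := by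
      intro j
      have h22 : (j + 2 : Fin n) = (j + 1) + 1 := by open Fin.CommRing in ring
      rw [h22, hedge1 (j+1), hedge1 j]
    have key3 : ∀ j : Fin n, (j + 1 : Fin n) ≠ j ∧ (j + 2 : Fin n) ≠ j ∧ (j + 2 : Fin n) ≠ j + 1 := by
      intro j
      have e1 : ((j + 1 : Fin n) : ℕ) = ((j : ℕ) + 1) % n := hedge1 j
      refine ⟨fun h => (natkey j j.isLt).1 ?_, fun h => (natkey j j.isLt).2.1 ?_,
        fun h => (natkey j j.isLt).2.2 ?_⟩
      · rw [← e1]; exact congrArg Fin.val h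
      · rw [← hval2 j]; exact congrArg Fin.val h
      · rw [← hval2 j, ← e1]; exact congrArg Fin.val h
    have path2 : ∀ j : Fin n, IsPath (ringAdj n) ![j, j + 1] := by
      intro j
      constructor
      · intro x y hxy
        fin_cases x <;> fin_cases y <;> simp only [Matrix.cons_val_zero, Matrix.cons_val_one,
            Matrix.head_cons] at hxy <;>
          first
            | rfl
            | exact absurd hxy (key3 j).1
            | exact absurd hxy.symm (key3 j).1
      · intro i
        fin_cases i
        simp only [Fin.succ_zero_eq_one, Fin.castSucc_zero, Matrix.cons_val_one,
          Matrix.head_cons, Matrix.cons_val_zero]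
        exact hedge1 j
    have path3 : ∀ j : Fin n, IsPath (ringAdj n) ![j, j + 1, j + 2] := by
      intro j
      constructor
      · intro x y hxy
        fin_cases x <;> fin_cases y <;> simp only [Matrix.cons_val_zero, Matrix.cons_val_one,
            Matrix.head_cons, Matrix.cons_val_fin_one, Matrix.cons_val_two, Matrix.tail_cons] at hxy <;>
          first
            | rfl
            | exact absurd hxy (key3 j).1
            | exact absurd hxy.symm (key3 j).1
            | exact absurd hxy (key3 j).2.1
            | exact absurd hxy.symm (key3 j).2.1
            | exact absurd hxy (key3 j).2.2
            | exact absurd hxy.symm (key3 j).2.2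
      · intro i
        fin_cases i
        · simpa using hedge1 j
        · have h22 : (j + 2 : Fin n) = (j + 1) + 1 := by open Fin.CommRing in ring
          simpa [h22] using hedge1 (j + 1)
    have hne : ∀ j : Fin n, ∃ x, x ∈ lab j (j + 1) := by
      intro j
      obtain ⟨l, -, hl⟩ := hP 1 ![j, j + 1] (path2 j)
      have h0 := hl 0
      simp only [Fin.castSucc_zero, Fin.succ_zero_eq_one, Matrix.cons_val_zero,
        Matrix.cons_val_one, Matrix.head_cons] at h0
      exact ⟨l 0, h0⟩
    choose m hm using hne
    have hstep : ∀ j : Fin n, m j < m (j + 1) := by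
      intro j
      obtain ⟨l, hmono, hl⟩ := hP 2 ![j, j + 1, j + 2] (path3 j)
      have h0 := hl 0
      have h1 := hl 1
      simp only [Fin.castSucc_zero, Fin.succ_zero_eq_one, Matrix.cons_val_zero,
        Matrix.cons_val_one, Matrix.head_cons] at h0
      have hc1 : (1 : Fin 2).castSucc = 1 := rfl
      have hc2 : (1 : Fin 2).succ = 2 := rfl
      rw [hc1, hc2] at h1
      simp only [Matrix.cons_val_one, Matrix.head_cons, Matrix.cons_val_two,
        Matrix.tail_cons] at h1
      have e0 : l 0 = m j :=
        Finset.card_le_one.mp (hcard j (j + 1) (hedge1 j)) _ h0 _ (hm j)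
      have e1 : l 1 = m (j + 1) := by
        have h22 : (j + 2 : Fin n) = (j + 1) + 1 := by open Fin.CommRing in ring
        rw [h22] at h1
        exact Finset.card_le_one.mp (hcard (j + 1) ((j + 1) + 1) (hedge1 (j + 1))) _ h1 _
          (hm (j + 1))
      have hlt : l 0 < l 1 := hmono (by decide : (0 : Fin 2) < 1)
      omega
    open Fin.CommRing in
    have hM : StrictMono (fun t : ℕ => m (t : Fin n)) := by
      apply strictMono_nat_of_lt_succ
      intro t
      open Fin.CommRing in
      have : ((t + 1 : ℕ) : Fin n) = (t : Fin n) + 1 := by push_cast; ring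
      simp only [this]
      exact hstep _
    have h1 := hM (show (0 : ℕ) < n by omega)
    open Fin.CommRing in
    have h2 : ((n : ℕ) : Fin n) = ((0 : ℕ) : Fin n) := by simp
    simp only [h2] at h1
    exact lt_irrefl _ h1
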